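/- In the multiplicative kernel case with initial data g₀(x) = e^{−x}/x, the function g(x;t) = e^{−(1+t)x} I₁(2x√t)/(x²√t) satisfies the Smoluchowski coagulation equation with K(x,y) = xy for 0 < t ≤ 1, where I₁ is the modified Bessel function of the first kind of order 1. -/

import Mathlib

open MeasureTheory Real

/-- The modified Bessel function of the first kind of order 1,
`I₁(z) = Σ_{m≥0} (z/2)^{2m+1} / (m! (m+1)!)`. -/
noncomputable def besselI1 (z : ℝ) : ℝ :=
  ∑' m : ℕ, (z / 2) ^ (2 * m + 1) / ((Nat.factorial m : ℝ) * (Nat.factorial (m + 1) : ℝ))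

/-- The closed-form multiplicative-kernel solution
`g(x;t) = e^{−(1+t)x} I₁(2x√t)/(x²√t)`. -/
noncomputable def gMul (x t : ℝ) : ℝ :=
  Real.exp (-(1 + t) * x) * besselI1 (2 * x * Real.sqrt t) / (x ^ 2 * Real.sqrt t)

noncomputable def Fb (u : ℝ) : ℝ :=
  ∑' m : ℕ, u ^ m / ((Nat.factorial m : ℝ) * (Nat.factorial (m + 1) : ℝ))

noncomputable def Gb (u : ℝ) : ℝ :=
  ∑' m : ℕ, u ^ m / ((Nat.factorial m : ℝ) * (Nat.factorial (m + 2) : ℝ))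

lemma fact_pos' (m k : ℕ) : (0:ℝ) < (Nat.factorial m : ℝ) * (Nat.factorial (m + k) : ℝ) := by
  positivity

lemma summable_Fb (u : ℝ) :
    Summable (fun m : ℕ => u ^ m / ((Nat.factorial m : ℝ) * (Nat.factorial (m + 1) : ℝ))) := by
  apply (Real.summable_pow_div_factorial |u|).of_norm_bounded
  intro m
  rw [norm_div, norm_pow, Real.norm_eq_abs, Real.norm_eq_abs, abs_of_pos (fact_pos' m 1)]
  apply div_le_div_of_nonneg_left (by positivity) (by positivity)
  calc (Nat.factorial m : ℝ) = (Nat.factorial m : ℝ) * 1 := by ring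
    _ ≤ (Nat.factorial m : ℝ) * (Nat.factorial (m+1) : ℝ) := by
        apply mul_le_mul_of_nonneg_left _ (by positivity)
        exact_mod_cast Nat.one_le_iff_ne_zero.2 (Nat.factorial_ne_zero _)

lemma summable_Gb (u : ℝ) :
    Summable (fun m : ℕ => u ^ m / ((Nat.factorial m : ℝ) * (Nat.factorial (m + 2) : ℝ))) := by
  apply (Real.summable_pow_div_factorial |u|).of_norm_bounded
  intro m
  rw [norm_div, norm_pow, Real.norm_eq_abs, Real.norm_eq_abs, abs_of_pos (fact_pos' m 2)]
  apply div_le_div_of_nonneg_left (by positivity) (by positivity)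
  calc (Nat.factorial m : ℝ) = (Nat.factorial m : ℝ) * 1 := by ring
    _ ≤ (Nat.factorial m : ℝ) * (Nat.factorial (m+2) : ℝ) := by
        apply mul_le_mul_of_nonneg_left _ (by positivity)
        exact_mod_cast Nat.one_le_iff_ne_zero.2 (Nat.factorial_ne_zero _)

lemma Fb_zero : Fb 0 = 1 := by
  rw [Fb, tsum_eq_single 0]
  · norm_num
  · intro m hm
    rw [zero_pow hm]
    simp


lemma summable_deriv_term (R : ℝ) (hR : 1 ≤ R) :
    Summable (fun n : ℕ => (n : ℝ) * R ^ (n - 1) / ((Nat.factorial n : ℝ) * (Nat.factorial (n + 1) : ℝ))) := by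
  apply (Real.summable_pow_div_factorial (2 * R)).of_norm_bounded
  intro n
  have hR0 : (0:ℝ) < R := lt_of_lt_of_le one_pos hR
  rw [Real.norm_eq_abs, abs_of_nonneg (by positivity)]
  have h1 : (n : ℝ) * R ^ (n - 1) ≤ (2 * R) ^ n := by
    have hn2 : (n : ℝ) ≤ 2 ^ n := by exact_mod_cast (Nat.lt_two_pow_self (n := n)).le
    have hRp : R ^ (n - 1) ≤ R ^ n := pow_le_pow_right₀ hR (Nat.sub_le n 1)
    calc (n : ℝ) * R ^ (n - 1) ≤ 2 ^ n * R ^ n :=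
          mul_le_mul hn2 hRp (by positivity) (by positivity)
      _ = (2 * R) ^ n := (mul_pow 2 R n).symm
  have h2 : (Nat.factorial n : ℝ) ≤ (Nat.factorial n : ℝ) * (Nat.factorial (n + 1) : ℝ) := by
    nth_rewrite 1 [← mul_one (Nat.factorial n : ℝ)]
    apply mul_le_mul_of_nonneg_left _ (by positivity)
    exact_mod_cast Nat.one_le_iff_ne_zero.2 (Nat.factorial_ne_zero _)
  exact div_le_div₀ (by positivity) h1 (by positivity) h2

lemma hasDerivAt_Fb (u : ℝ) : HasDerivAt Fb (Gb u) u := by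
  set R : ℝ := |u| + 1 with hRdef
  have hR1 : 1 ≤ R := le_add_of_nonneg_left (abs_nonneg u)
  have hmem : u ∈ Metric.ball (0:ℝ) R := by
    rw [mem_ball_zero_iff, Real.norm_eq_abs]
    linarith
  have key : HasDerivAt (fun z => ∑' m : ℕ,
      z ^ m / ((Nat.factorial m : ℝ) * (Nat.factorial (m + 1) : ℝ)))
      (∑' m : ℕ, ((m : ℝ) * u ^ (m - 1)) / ((Nat.factorial m : ℝ) * (Nat.factorial (m + 1) : ℝ))) u := by
    apply hasDerivAt_tsum_of_isPreconnected (summable_deriv_term R hR1)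
      Metric.isOpen_ball ((convex_ball (0:ℝ) R).isPreconnected)
      (g := fun m y => y ^ m / ((Nat.factorial m : ℝ) * (Nat.factorial (m + 1) : ℝ)))
      (g' := fun m y => ((m : ℝ) * y ^ (m - 1)) / ((Nat.factorial m : ℝ) * (Nat.factorial (m + 1) : ℝ)))
      (y₀ := u) ?_ ?_ hmem (summable_Fb u) hmem
    · intro m y _
      exact (hasDerivAt_pow m y).div_const _
    · intro m y hy
      rw [Real.norm_eq_abs, abs_div, abs_of_pos (fact_pos' m 1), abs_mul, Nat.abs_cast, abs_pow]
      apply div_le_div_of_nonneg_right _ (by positivity)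
      apply mul_le_mul_of_nonneg_left _ (Nat.cast_nonneg m)
      apply pow_le_pow_left₀ (abs_nonneg y)
      have := mem_ball_zero_iff.1 hy
      rw [Real.norm_eq_abs] at this
      linarith
  have hsum' : Summable (fun m : ℕ =>
      ((m : ℝ) * u ^ (m - 1)) / ((Nat.factorial m : ℝ) * (Nat.factorial (m + 1) : ℝ))) := by
    apply (summable_deriv_term R hR1).of_norm_bounded
    intro m
    rw [Real.norm_eq_abs, abs_div, abs_of_pos (fact_pos' m 1), abs_mul, Nat.abs_cast, abs_pow]
    apply div_le_div_of_nonneg_right _ (by positivity)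
    apply mul_le_mul_of_nonneg_left _ (Nat.cast_nonneg m)
    apply pow_le_pow_left₀ (abs_nonneg u)
    linarith [le_abs_self u, abs_nonneg u]
  have hGb : (∑' m : ℕ, ((m : ℝ) * u ^ (m - 1)) / ((Nat.factorial m : ℝ) * (Nat.factorial (m + 1) : ℝ))) = Gb u := by
    rw [hsum'.tsum_eq_zero_add]
    simp only [Nat.cast_zero, zero_mul, zero_div, zero_add]
    rw [Gb]
    congr 1; funext m
    have h1 : (Nat.factorial (m+1) : ℝ) = (m+1) * (Nat.factorial m : ℝ) := by
      rw [Nat.factorial_succ]; push_cast; ring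
    have h2 : (Nat.factorial (m+2) : ℝ) ≠ 0 := by positivity
    have h3 : (Nat.factorial m : ℝ) ≠ 0 := by positivity
    simp only [Nat.add_sub_cancel, Nat.cast_add, Nat.cast_one]
    rw [h1]
    field_simp
  rw [← hGb]
  exact key

-- K1
lemma gMul_eq {x t : ℝ} (hx : 0 < x) (ht : 0 < t) :
    gMul x t = Real.exp (-(1 + t) * x) * Fb (x ^ 2 * t) / x := by
  have hst : 0 < Real.sqrt t := Real.sqrt_pos.2 ht
  have key : besselI1 (2 * x * Real.sqrt t) = x * Real.sqrt t * Fb (x ^ 2 * t) := by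
    rw [besselI1, Fb, ← tsum_mul_left]
    congr 1; funext m
    have h1 : 2 * x * Real.sqrt t / 2 = x * Real.sqrt t := by ring
    have h2 : (x * Real.sqrt t) ^ (2 * m + 1) = (x * Real.sqrt t) * (x ^ 2 * t) ^ m := by
      have : (x * Real.sqrt t) ^ (2 * m + 1) = (x * Real.sqrt t) * ((x * Real.sqrt t)^2) ^ m := by
        rw [← pow_mul]; ring
      rw [this, mul_pow, Real.sq_sqrt ht.le]
    rw [h1, h2]
    ring
  rw [gMul, key]
  field_simp

example : True := trivial

lemma catalan_mul_fact (m : ℕ) :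
    (catalan m : ℝ) * ((Nat.factorial m : ℝ) * (Nat.factorial (m + 1) : ℝ))
      = (Nat.factorial (2 * m) : ℝ) := by
  have h1 : catalan m * (Nat.factorial m * Nat.factorial (m + 1)) = Nat.factorial (2 * m) := by
    have h2 := succ_mul_catalan_eq_centralBinom m
    have h3 : Nat.centralBinom m * Nat.factorial m * Nat.factorial m = Nat.factorial (2 * m) := by
      have := Nat.choose_mul_factorial_mul_factorial (show m ≤ 2 * m by omega)
      simpa [Nat.centralBinom, show 2 * m - m = m by omega] using this
    calc catalan m * (Nat.factorial m * Nat.factorial (m + 1))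
        = ((m + 1) * catalan m) * Nat.factorial m * Nat.factorial m := by
          rw [Nat.factorial_succ]; ring
      _ = Nat.centralBinom m * Nat.factorial m * Nat.factorial m := by rw [h2]
      _ = Nat.factorial (2 * m) := h3
  exact_mod_cast h1

lemma centralBinom_sq_le (n : ℕ) : (Nat.centralBinom n) ^ 2 * (2 * n + 1) ≤ 16 ^ n := by
  induction n with
  | zero => simp [Nat.centralBinom]
  | succ n ih =>
    have h := Nat.succ_mul_centralBinom_succ n
    have key : (n+1)^2 * ((Nat.centralBinom (n+1))^2 * (2*(n+1)+1)) ≤ (n+1)^2 * 16^(n+1) := by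
      have e1 : (n+1)^2 * ((Nat.centralBinom (n+1))^2 * (2*(n+1)+1))
          = ((n+1) * Nat.centralBinom (n+1))^2 * (2*n+3) := by ring
      rw [e1, h]
      calc (2*(2*n+1)*Nat.centralBinom n)^2 * (2*n+3)
          = (4*(2*n+1)*(2*n+3)) * ((Nat.centralBinom n)^2 * (2*n+1)) := by ring
        _ ≤ (4*(2*n+1)*(2*n+3)) * 16^n := Nat.mul_le_mul_left _ ih
        _ ≤ (16*(n+1)^2) * 16^n := Nat.mul_le_mul_right _ (by nlinarith)
        _ = (n+1)^2 * 16^(n+1) := by ring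
    exact Nat.le_of_mul_le_mul_left key (by positivity)

lemma catalan_div_le (n : ℕ) :
    (catalan n : ℝ) / 4 ^ n ≤ 1 / (((n : ℝ) + 1) * Real.sqrt ((n : ℝ) + 1)) := by
  have hcb : (Nat.centralBinom n : ℝ) * Real.sqrt ((n:ℝ) + 1) ≤ 4 ^ n := by
    have h1 : (Nat.centralBinom n : ℝ)^2 * (2*(n:ℝ)+1) ≤ 16^n := by
      exact_mod_cast centralBinom_sq_le n
    have h2 : (Nat.centralBinom n : ℝ) * Real.sqrt ((n:ℝ)+1)
        ≤ (Nat.centralBinom n : ℝ) * Real.sqrt (2*(n:ℝ)+1) := by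
      apply mul_le_mul_of_nonneg_left (Real.sqrt_le_sqrt (by linarith)) (Nat.cast_nonneg _)
    refine h2.trans ?_
    have h3 : (Nat.centralBinom n : ℝ) * Real.sqrt (2*(n:ℝ)+1)
        = Real.sqrt ((Nat.centralBinom n : ℝ)^2 * (2*(n:ℝ)+1)) := by
      rw [Real.sqrt_mul (by positivity), Real.sqrt_sq (Nat.cast_nonneg _)]
    rw [h3]
    calc Real.sqrt ((Nat.centralBinom n : ℝ)^2 * (2*(n:ℝ)+1)) ≤ Real.sqrt (16^n) :=
          Real.sqrt_le_sqrt h1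
      _ = 4 ^ n := by
          rw [show (16:ℝ)^n = ((4:ℝ)^n)^2 by rw [← pow_mul, pow_mul']; norm_num,
            Real.sqrt_sq (by positivity)]
  have hc : ((n:ℝ)+1) * (catalan n : ℝ) = (Nat.centralBinom n : ℝ) := by
    exact_mod_cast succ_mul_catalan_eq_centralBinom n
  rw [div_le_div_iff₀ (by positivity) (by positivity)]
  have hs : (0:ℝ) < Real.sqrt ((n:ℝ)+1) := Real.sqrt_pos.2 (by positivity)
  nlinarith [hcb, hs, Nat.cast_nonneg (α := ℝ) (catalan n)]

lemma summable_catalan_quarter : Summable (fun n : ℕ => (catalan n : ℝ) / 4 ^ n) := by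
  have base : Summable (fun n : ℕ => 1 / ((n : ℝ)) ^ (3/2 : ℝ)) :=
    Real.summable_one_div_nat_rpow.mpr (by norm_num)
  have shift : Summable (fun n : ℕ => 1 / ((n : ℝ) + 1) ^ (3/2 : ℝ)) := by
    have := (summable_nat_add_iff (f := fun n : ℕ => 1 / ((n : ℝ)) ^ (3/2 : ℝ)) 1).2 base
    simpa using this
  have shift' : Summable (fun n : ℕ => 1 / (((n : ℝ) + 1) * Real.sqrt ((n : ℝ) + 1))) := by
    refine shift.congr fun n => ?_
    congr 1
    have hx : (0:ℝ) < (n : ℝ) + 1 := by positivity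
    rw [show (3/2 : ℝ) = 1 + 1/2 by norm_num, Real.rpow_add hx, Real.rpow_one,
      ← Real.sqrt_eq_rpow]
  apply shift'.of_norm_bounded
  intro n
  rw [Real.norm_eq_abs, abs_of_nonneg (by positivity)]
  exact catalan_div_le n

lemma summable_catalan_z {z : ℝ} (h0 : 0 ≤ z) (h4 : z ≤ 1/4) :
    Summable (fun n : ℕ => (catalan n : ℝ) * z ^ n) := by
  apply summable_catalan_quarter.of_norm_bounded
  intro n
  rw [Real.norm_eq_abs, abs_of_nonneg (by positivity), div_eq_mul_inv, ← inv_pow]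
  apply mul_le_mul_of_nonneg_left _ (Nat.cast_nonneg _)
  apply pow_le_pow_left₀ h0
  rw [← one_div]; exact h4

noncomputable def Tcat (z : ℝ) : ℝ := ∑' n : ℕ, (catalan n : ℝ) * z ^ n

set_option maxHeartbeats 1000000 in
lemma Tcat_quadratic {z : ℝ} (h0 : 0 ≤ z) (h4 : z ≤ 1/4) :
    z * Tcat z ^ 2 - Tcat z + 1 = 0 := by
  have hs := summable_catalan_z h0 h4
  have hnorm : Summable (fun n : ℕ => ‖(catalan n : ℝ) * z ^ n‖) := by
    refine hs.congr fun n => ?_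
    rw [Real.norm_eq_abs, abs_of_nonneg (mul_nonneg (Nat.cast_nonneg _) (pow_nonneg h0 n))]
  have hsq : Tcat z ^ 2 = ∑' n : ℕ, (catalan (n+1) : ℝ) * z ^ n := by
    rw [Tcat, sq, tsum_mul_tsum_eq_tsum_sum_antidiagonal_of_summable_norm hnorm hnorm]
    congr 1; funext n
    have : ∑ kl ∈ Finset.HasAntidiagonal.antidiagonal n, ((catalan kl.1 : ℝ) * z ^ kl.1) * ((catalan kl.2 : ℝ) * z ^ kl.2)
        = ∑ kl ∈ Finset.HasAntidiagonal.antidiagonal n, ((catalan kl.1 : ℝ) * (catalan kl.2 : ℝ)) * z ^ n := by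
      apply Finset.sum_congr rfl
      intro kl hkl
      rw [Finset.HasAntidiagonal.mem_antidiagonal] at hkl
      rw [← hkl, pow_add]; ring
    rw [this, ← Finset.sum_mul]
    congr 1
    rw [catalan_succ' n]
    push_cast
    rfl
  have hshift : Summable (fun n : ℕ => (catalan (n+1) : ℝ) * z ^ (n+1)) :=
    (summable_nat_add_iff 1).2 hs
  have hT : Tcat z = 1 + ∑' n : ℕ, (catalan (n+1) : ℝ) * z ^ (n+1) := by
    rw [Tcat, hs.tsum_eq_zero_add, catalan_zero]
    norm_num
  have hzT : z * Tcat z ^ 2 = ∑' n : ℕ, (catalan (n+1) : ℝ) * z ^ (n+1) := by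
    rw [hsq, ← tsum_mul_left]
    congr 1; funext n
    rw [pow_succ]; ring
  rw [hzT, hT]; ring

lemma continuousOn_Tcat : ContinuousOn Tcat (Set.Icc 0 (1/4 : ℝ)) := by
  have h := tendstoUniformlyOn_tsum summable_catalan_quarter
    (f := fun n (z : ℝ) => (catalan n : ℝ) * z ^ n) (s := Set.Icc 0 (1/4 : ℝ)) ?_
  · exact h.continuousOn (Filter.Eventually.frequently (Filter.Eventually.of_forall fun s =>
      (continuousOn_finset_sum s fun n _ => (continuous_const.mul (continuous_pow n)).continuousOn)))
  · intro n z hz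
    obtain ⟨hz0, hz4⟩ := hz
    rw [Real.norm_eq_abs, abs_of_nonneg (by positivity), div_eq_mul_inv, ← inv_pow]
    apply mul_le_mul_of_nonneg_left _ (Nat.cast_nonneg _)
    apply pow_le_pow_left₀ hz0
    rw [← one_div]; exact hz4

lemma Tcat_formula {z : ℝ} (h0 : 0 ≤ z) (h4 : z ≤ 1/4) :
    2 * z * Tcat z = 1 - Real.sqrt (1 - 4 * z) := by
  set φ : ℝ → ℝ := fun w => 2 * w * Tcat w - 1 with hφ
  have hsq : ∀ w ∈ Set.Icc (0:ℝ) (1/4), φ w ^ 2 = 1 - 4 * w := by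
    intro w hw
    have hq := Tcat_quadratic hw.1 hw.2
    simp only [hφ]
    nlinarith [hq]
  have hcont : ContinuousOn φ (Set.Icc (0:ℝ) (1/4)) := by
    apply ContinuousOn.sub _ continuousOn_const
    exact ContinuousOn.mul (by fun_prop) continuousOn_Tcat
  have hneg : ∀ w ∈ Set.Icc (0:ℝ) (1/4), φ w ≤ 0 := by
    intro w hw
    by_contra hpos
    push_neg at hpos
    have hw0 : (0:ℝ) ∈ Set.Icc (0:ℝ) (1/4) := by constructor <;> norm_num
    have hφ0 : φ 0 = -1 := by simp [hφ]
    have hsub : Set.Icc (0:ℝ) w ⊆ Set.Icc (0:ℝ) (1/4) := Set.Icc_subset_Icc le_rfl hw.2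
    have hIVT := intermediate_value_Icc hw.1 (hcont.mono hsub)
    have h0mem : (0:ℝ) ∈ Set.Icc (φ 0) (φ w) := by
      rw [hφ0]; exact ⟨by linarith, hpos.le⟩
    obtain ⟨c, hc, hφc⟩ := hIVT h0mem
    have hcmem : c ∈ Set.Icc (0:ℝ) (1/4) := hsub hc
    have : (1:ℝ) - 4 * c = 0 := by rw [← hsq c hcmem, hφc]; norm_num
    have hc14 : c = 1/4 := by linarith
    have hw14 : w = 1/4 := le_antisymm hw.2 (hc14 ▸ hc.2)
    have : φ w ^ 2 = 0 := by rw [hsq w hw]; rw [hw14]; norm_num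
    have : φ w = 0 := by nlinarith
    linarith
  have hwmem : z ∈ Set.Icc (0:ℝ) (1/4) := ⟨h0, h4⟩
  have h1 : Real.sqrt (1 - 4 * z) = -φ z := by
    rw [← hsq z hwmem]
    rw [show φ z ^ 2 = (-φ z)^2 by ring]
    exact Real.sqrt_sq (by linarith [hneg z hwmem])
  simp only [hφ] at h1 ⊢
  linarith

lemma Tcat_val {t : ℝ} (ht : 0 < t) (ht1 : t ≤ 1) : Tcat (t / (1+t)^2) = 1 + t := by
  have h1t : (0:ℝ) < 1 + t := by linarith
  have h0 : 0 ≤ t / (1+t)^2 := by positivity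
  have h4 : t / (1+t)^2 ≤ 1/4 := by
    rw [div_le_div_iff₀ (by positivity) (by norm_num)]
    nlinarith [sq_nonneg (1 - t)]
  have hf := Tcat_formula h0 h4
  have hz : 1 - 4 * (t / (1+t)^2) = ((1-t)/(1+t))^2 := by
    field_simp
    ring
  rw [hz, Real.sqrt_sq (div_nonneg (by linarith) h1t.le)] at hf
  have h2z : 2 * (t / (1+t)^2) ≠ 0 := by positivity
  apply mul_left_cancel₀ h2z
  rw [show 2 * (t / (1+t)^2) * Tcat (t / (1+t)^2) = 2 * (t / (1+t)^2) * Tcat (t / (1+t)^2) from rfl]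
  rw [hf]
  field_simp
  ring

lemma integrableOn_pow_exp (n : ℕ) {r : ℝ} (hr : 0 < r) :
    IntegrableOn (fun y : ℝ => y ^ n * Real.exp (-(r * y))) (Set.Ioi 0) := by
  have h := integrableOn_rpow_mul_exp_neg_mul_rpow (p := 1) (s := (n:ℝ)) (b := r)
    (lt_of_lt_of_le neg_one_lt_zero (Nat.cast_nonneg n)) one_pos hr
  refine h.congr_fun (fun y _ => ?_) measurableSet_Ioi
  beta_reduce
  rw [Real.rpow_natCast, Real.rpow_one, neg_mul]

lemma integral_pow_exp (n : ℕ) {r : ℝ} (hr : 0 < r) :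
    ∫ y in Set.Ioi (0:ℝ), y ^ n * Real.exp (-(r * y)) = (Nat.factorial n : ℝ) / r ^ (n + 1) := by
  have h := Real.integral_rpow_mul_exp_neg_mul_Ioi (a := (n:ℝ) + 1) (r := r) (by positivity) hr
  have e : (fun y : ℝ => y ^ ((n:ℝ) + 1 - 1) * Real.exp (-(r * y)))
      = fun y : ℝ => y ^ n * Real.exp (-(r * y)) := by
    funext y
    rw [show (n:ℝ) + 1 - 1 = ((n:ℕ):ℝ) by ring, Real.rpow_natCast]
  rw [e] at h
  rw [h, Real.Gamma_nat_eq_factorial,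
    show ((n:ℝ) + 1) = ((n + 1 : ℕ) : ℝ) by push_cast; ring, Real.rpow_natCast]
  rw [div_pow, one_pow]
  field_simp

lemma mass_eq {t : ℝ} (ht : 0 < t) (ht1 : t ≤ 1) :
    ∫ y in Set.Ioi (0:ℝ), Real.exp (-((1 + t) * y)) * Fb (y ^ 2 * t) = 1 := by
  have hr : (0:ℝ) < 1 + t := by linarith
  set r : ℝ := 1 + t with hrdef
  set Fm : ℕ → ℝ → ℝ := fun m y =>
    (t ^ m / ((Nat.factorial m : ℝ) * (Nat.factorial (m+1) : ℝ))) * (y ^ (2*m) * Real.exp (-(r * y)))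
    with hFm
  have hz0 : (0:ℝ) ≤ t / (1+t)^2 := by positivity
  have hz4 : t / (1+t)^2 ≤ 1/4 := by
    rw [div_le_div_iff₀ (by positivity) (by norm_num)]
    nlinarith [sq_nonneg (1 - t)]
  have hptw : ∀ y : ℝ, Real.exp (-(r * y)) * Fb (y ^ 2 * t) = ∑' m : ℕ, Fm m y := by
    intro y
    rw [Fb, ← tsum_mul_left]
    congr 1; funext m
    rw [hFm]
    simp only
    rw [mul_pow, pow_mul]
    ring
  have hint : ∀ m : ℕ, IntegrableOn (Fm m) (Set.Ioi 0) := fun m =>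
    ((integrableOn_pow_exp (2*m) hr).const_mul _)
  have hval : ∀ m : ℕ, ∫ y in Set.Ioi (0:ℝ), Fm m y
      = (1/r) * ((catalan m : ℝ) * (t / r^2) ^ m) := by
    intro m
    rw [hFm]
    simp only
    rw [MeasureTheory.integral_const_mul, integral_pow_exp (2*m) hr]
    have hc := catalan_mul_fact m
    have h1 : (0:ℝ) < (Nat.factorial m : ℝ) * (Nat.factorial (m+1) : ℝ) := fact_pos' m 1
    rw [div_pow, ← hc]
    rw [show (r^2)^m = r^(2*m) by rw [← pow_mul]]
    have hrm : (0:ℝ) < r ^ (2*m+1) := by positivity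
    field_simp
    ring
  have hnorm : ∀ m : ℕ, ∫ y in Set.Ioi (0:ℝ), ‖Fm m y‖ = ∫ y in Set.Ioi (0:ℝ), Fm m y := by
    intro m
    apply MeasureTheory.integral_congr_ae
    filter_upwards with y
    rw [Real.norm_eq_abs, abs_of_nonneg]
    have hy : (0:ℝ) ≤ y ^ (2*m) := by rw [pow_mul]; positivity
    exact mul_nonneg (div_nonneg (pow_nonneg ht.le m) (fact_pos' m 1).le)
      (mul_nonneg hy (Real.exp_nonneg _))
  have hsummable : Summable (fun m : ℕ => ∫ y in Set.Ioi (0:ℝ), ‖Fm m y‖) := by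
    apply Summable.congr _ (fun m => (hnorm m).symm)
    apply Summable.congr _ (fun m => (hval m).symm)
    exact (summable_catalan_z hz0 hz4).mul_left _
  calc ∫ y in Set.Ioi (0:ℝ), Real.exp (-((1 + t) * y)) * Fb (y ^ 2 * t)
      = ∫ y in Set.Ioi (0:ℝ), ∑' m : ℕ, Fm m y := by
        apply MeasureTheory.integral_congr_ae
        filter_upwards with y
        exact hptw y
    _ = ∑' m : ℕ, ∫ y in Set.Ioi (0:ℝ), Fm m y :=
        (MeasureTheory.integral_tsum_of_summable_integral_norm hint hsummable).symm
    _ = (1/r) * Tcat (t / r^2) := by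
        rw [Tcat, ← tsum_mul_left]
        exact tsum_congr hval
    _ = 1 := by
        rw [hrdef, Tcat_val ht ht1]
        field_simp

lemma beta_integral (x : ℝ) : ∀ p q : ℕ,
    ∫ y in (0:ℝ)..x, (x - y) ^ p * y ^ q =
      ((Nat.factorial p : ℝ) * (Nat.factorial q : ℝ) / (Nat.factorial (p + q + 1) : ℝ))
        * x ^ (p + q + 1) := by
  intro p
  induction p with
  | zero =>
    intro q
    simp only [pow_zero, one_mul, Nat.factorial_zero, Nat.cast_one, zero_add]
    rw [integral_pow]
    rw [Nat.factorial_succ]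
    have : ((q:ℝ) + 1) ≠ 0 := by positivity
    push_cast
    field_simp
    ring
  | succ p ih =>
    intro q
    have hq1 : ((q:ℝ) + 1) ≠ 0 := by positivity
    have hu : ∀ y ∈ Set.uIcc (0:ℝ) x,
        HasDerivAt (fun y : ℝ => (x - y) ^ (p+1))
          (-(((p:ℝ)+1) * (x - y) ^ p)) y := by
      intro y _
      have h1 : HasDerivAt (fun y : ℝ => x - y) (-1) y := by
        simpa using (hasDerivAt_id y).const_sub x
      have h2 := (hasDerivAt_pow (p+1) (x - y)).comp y h1
      refine h2.congr_deriv ?_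
      push_cast
      ring
    have hv : ∀ y ∈ Set.uIcc (0:ℝ) x,
        HasDerivAt (fun y : ℝ => y ^ (q+1) / ((q:ℝ)+1)) (y ^ q) y := by
      intro y _
      have h2 := (hasDerivAt_pow (q+1) y).div_const ((q:ℝ)+1)
      refine h2.congr_deriv ?_
      push_cast
      field_simp
    have hiu : IntervalIntegrable (fun y : ℝ => -(((p:ℝ)+1) * (x - y) ^ p)) volume 0 x := by
      apply Continuous.intervalIntegrable
      fun_prop
    have hiv : IntervalIntegrable (fun y : ℝ => y ^ q) volume 0 x := by
      apply Continuous.intervalIntegrable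
      fun_prop
    have key := intervalIntegral.integral_mul_deriv_eq_deriv_mul hu hv hiu hiv
    -- key : ∫ (x-y)^(p+1) * y^q = ... - ∫ (-(p+1)(x-y)^p) * (y^(q+1)/(q+1))
    rw [key]
    have e1 : (fun y : ℝ => -(((p:ℝ)+1) * (x - y) ^ p) * (y ^ (q+1) / ((q:ℝ)+1)))
        = fun y : ℝ => (-((p:ℝ)+1) / ((q:ℝ)+1)) * ((x - y) ^ p * y ^ (q+1)) := by
      funext y; field_simp
    rw [e1, intervalIntegral.integral_const_mul, ih (q+1)]
    have h2 : (0:ℝ) < (Nat.factorial (p + (q+1) + 1) : ℝ) := by positivity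
    have h3 : p + (q + 1) + 1 = p + 1 + q + 1 := by omega
    rw [h3] at *
    simp only [sub_self, ne_eq, zero_pow, Nat.succ_ne_zero, not_false_eq_true, zero_mul,
      mul_zero, zero_div, zero_sub, sub_zero, neg_zero]
    rw [Nat.factorial_succ p, Nat.factorial_succ q]
    have h4 : ((Nat.factorial (p+1+q+1)) : ℝ) ≠ 0 := by positivity
    push_cast
    field_simp

lemma centralBinom_le_four_pow (n : ℕ) : Nat.centralBinom n ≤ 4 ^ n := by
  induction n with
  | zero => simp [Nat.centralBinom]
  | succ n ih =>
    have h := Nat.succ_mul_centralBinom_succ n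
    have : (n+1) * Nat.centralBinom (n+1) ≤ (n+1) * 4 ^ (n+1) := by
      rw [h]
      calc 2 * (2*n+1) * Nat.centralBinom n ≤ 2 * (2*n+2) * Nat.centralBinom n := by
            apply Nat.mul_le_mul_right; omega
        _ = (n+1) * (4 * Nat.centralBinom n) := by ring
        _ ≤ (n+1) * (4 * 4^n) := by
            apply Nat.mul_le_mul_left
            exact Nat.mul_le_mul_left _ ih
        _ = (n+1) * 4^(n+1) := by ring
    exact Nat.le_of_mul_le_mul_left this (by positivity)

lemma catalan_le_four_pow (n : ℕ) : catalan n ≤ 4 ^ n := by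
  have h := succ_mul_catalan_eq_centralBinom n
  have h2 : catalan n ≤ (n+1) * catalan n := Nat.le_mul_of_pos_left _ (by omega)
  exact h2.trans (h.le.trans (centralBinom_le_four_pow n))

lemma summable_Fb_norm (u : ℝ) :
    Summable (fun m : ℕ => ‖u ^ m / ((Nat.factorial m : ℝ) * (Nat.factorial (m + 1) : ℝ))‖) :=
  (summable_Fb u).norm

lemma gb_coeff (k : ℕ) :
    (catalan (k+1) : ℝ) * ((Nat.factorial k : ℝ) * (Nat.factorial (k+2) : ℝ))
      = 2 * (Nat.factorial (2*k+1) : ℝ) := by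
  have A := catalan_mul_fact (k+1)
  -- A : cat (k+1) * ((k+1)! * (k+2)!) = (2*(k+1))!
  have B : (Nat.factorial (2*(k+1)) : ℝ) = (2*(k:ℝ)+2) * (Nat.factorial (2*k+1) : ℝ) := by
    rw [show 2*(k+1) = (2*k+1) + 1 by omega, Nat.factorial_succ]
    push_cast; ring
  have C : (Nat.factorial (k+1) : ℝ) = ((k:ℝ)+1) * (Nat.factorial k : ℝ) := by
    rw [Nat.factorial_succ]; push_cast; ring
  rw [show k+1+1 = k+2 from rfl, C] at A
  rw [B] at A
  have h1 : ((k:ℝ)+1) ≠ 0 := by positivity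
  nlinarith [A]

lemma conv_eq {x t : ℝ} (hx : 0 < x) (ht : 0 ≤ t) :
    ∫ y in (0:ℝ)..x, Fb ((x - y) ^ 2 * t) * Fb (y ^ 2 * t) = 2 * x * Gb (x ^ 2 * t) := by
  set c : ℕ → ℝ := fun i => (Nat.factorial i : ℝ) * (Nat.factorial (i+1) : ℝ) with hc
  have hcpos : ∀ i, (0:ℝ) < c i := fun i => fact_pos' i 1
  set H : ℕ → ℝ → ℝ := fun k y =>
    ∑ kl ∈ Finset.HasAntidiagonal.antidiagonal k,
      (((x - y) ^ 2 * t) ^ kl.1 / c kl.1) * ((y ^ 2 * t) ^ kl.2 / c kl.2) with hH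
  have hptw : ∀ y : ℝ, Fb ((x - y) ^ 2 * t) * Fb (y ^ 2 * t) = ∑' k : ℕ, H k y := by
    intro y
    rw [Fb, Fb]
    exact tsum_mul_tsum_eq_tsum_sum_antidiagonal_of_summable_norm
      (summable_Fb_norm _) (summable_Fb_norm _)
  have hHcont : ∀ k, Continuous (H k) := by
    intro k
    apply continuous_finset_sum
    intro kl _
    fun_prop
  have hHnonneg : ∀ k y, 0 ≤ H k y := by
    intro k y
    apply Finset.sum_nonneg
    intro kl _
    have h1 : (0:ℝ) ≤ ((x - y)^2 * t) ^ kl.1 := pow_nonneg (by positivity) _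
    have h2 : (0:ℝ) ≤ (y^2 * t) ^ kl.2 := pow_nonneg (by positivity) _
    exact mul_nonneg (div_nonneg h1 (hcpos _).le) (div_nonneg h2 (hcpos _).le)
  have hHval : ∀ k, ∫ y in (0:ℝ)..x, H k y
      = (catalan (k+1) : ℝ) * t ^ k * x ^ (2*k+1) / (Nat.factorial (2*k+1) : ℝ) := by
    intro k
    rw [hH]
    simp only
    rw [intervalIntegral.integral_finset_sum
      (fun kl _ => Continuous.intervalIntegrable (by fun_prop) _ _)]
    have hterm : ∀ kl ∈ Finset.HasAntidiagonal.antidiagonal k,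
        ∫ y in (0:ℝ)..x, (((x - y) ^ 2 * t) ^ kl.1 / c kl.1) * ((y ^ 2 * t) ^ kl.2 / c kl.2)
        = ((catalan kl.1 : ℝ) * (catalan kl.2 : ℝ)) *
            (t ^ k * x ^ (2*k+1) / (Nat.factorial (2*k+1) : ℝ)) := by
      intro kl hkl
      obtain ⟨i, j⟩ := kl
      rw [Finset.HasAntidiagonal.mem_antidiagonal] at hkl
      simp only at hkl ⊢
      have e1 : (fun y : ℝ => (((x - y) ^ 2 * t) ^ i / c i) * ((y ^ 2 * t) ^ j / c j))
          = fun y : ℝ => (t ^ i * t ^ j / (c i * c j)) * ((x - y) ^ (2*i) * y ^ (2*j)) := by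
        funext y
        rw [mul_pow, mul_pow, pow_mul, pow_mul]
        field_simp
      rw [e1, intervalIntegral.integral_const_mul, beta_integral x (2*i) (2*j)]
      have h2 : 2*i + 2*j + 1 = 2*k + 1 := by omega
      rw [h2]
      rw [← pow_add, hkl]
      have hci := catalan_mul_fact i
      have hcj := catalan_mul_fact j
      have h3 : (Nat.factorial (2*i) : ℝ) = (catalan i : ℝ) * c i := hci.symm
      have h4 : (Nat.factorial (2*j) : ℝ) = (catalan j : ℝ) * c j := hcj.symm
      rw [h3, h4]
      have h5 : (Nat.factorial (2*k+1) : ℝ) ≠ 0 := by positivity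
      have hci0 : c i ≠ 0 := (hcpos i).ne'
      have hcj0 : c j ≠ 0 := (hcpos j).ne'
      field_simp
    rw [Finset.sum_congr rfl hterm, ← Finset.sum_mul]
    have h6 : ∑ kl ∈ Finset.HasAntidiagonal.antidiagonal k, (catalan kl.1 : ℝ) * (catalan kl.2 : ℝ)
        = (catalan (k+1) : ℝ) := by
      rw [catalan_succ' k]
      push_cast
      rfl
    rw [h6]
    ring
  have hIsum : Summable (fun k : ℕ =>
      (catalan (k+1) : ℝ) * t ^ k * x ^ (2*k+1) / (Nat.factorial (2*k+1) : ℝ)) := by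
    apply ((Real.summable_pow_div_factorial (4*t*x^2)).mul_left (4*x)).of_norm_bounded
    intro k
    have hcat : (catalan (k+1) : ℝ) ≤ 4^(k+1) := by
      exact_mod_cast catalan_le_four_pow (k+1)
    have hfact : (Nat.factorial k : ℝ) ≤ (Nat.factorial (2*k+1) : ℝ) := by
      exact_mod_cast Nat.factorial_le (by omega)
    rw [Real.norm_eq_abs, abs_of_nonneg (by positivity)]
    rw [div_le_iff₀ (by positivity)]
    have hkf : (0:ℝ) < (Nat.factorial k : ℝ) := by positivity
    calc (catalan (k+1) : ℝ) * t ^ k * x ^ (2*k+1)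
        ≤ 4^(k+1) * t ^ k * x ^ (2*k+1) := by
          apply mul_le_mul_of_nonneg_right (mul_le_mul_of_nonneg_right hcat (pow_nonneg ht k))
          positivity
      _ = (4*x) * ((4*t*x^2)^k) := by
          rw [show x^(2*k+1) = (x^2)^k * x by rw [pow_succ, pow_mul], mul_pow, mul_pow]
          ring
      _ = (4*x) * ((4*t*x^2)^k / (Nat.factorial k : ℝ)) * (Nat.factorial k : ℝ) := by
          field_simp
      _ ≤ (4*x) * ((4*t*x^2)^k / (Nat.factorial k : ℝ)) * (Nat.factorial (2*k+1) : ℝ) := by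
          apply mul_le_mul_of_nonneg_left hfact
          positivity
  have hint : ∀ k, IntegrableOn (H k) (Set.Ioc 0 x) := fun k =>
    (hHcont k).integrableOn_Ioc
  have hnormeq : ∀ k, ∫ y in Set.Ioc (0:ℝ) x, ‖H k y‖ = ∫ y in Set.Ioc (0:ℝ) x, H k y := by
    intro k
    apply MeasureTheory.integral_congr_ae
    filter_upwards with y
    exact Real.norm_of_nonneg (hHnonneg k y)
  have hIoc : ∀ k, ∫ y in Set.Ioc (0:ℝ) x, H k y = ∫ y in (0:ℝ)..x, H k y := by
    intro k
    rw [intervalIntegral.integral_of_le hx.le]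
  have hnormsum : Summable (fun k => ∫ y in Set.Ioc (0:ℝ) x, ‖H k y‖) := by
    apply Summable.congr hIsum
    intro k
    rw [hnormeq k, hIoc k, hHval k]
  calc ∫ y in (0:ℝ)..x, Fb ((x - y) ^ 2 * t) * Fb (y ^ 2 * t)
      = ∫ y in Set.Ioc (0:ℝ) x, ∑' k : ℕ, H k y := by
        rw [intervalIntegral.integral_of_le hx.le]
        apply MeasureTheory.integral_congr_ae
        filter_upwards with y
        exact hptw y
    _ = ∑' k : ℕ, ∫ y in Set.Ioc (0:ℝ) x, H k y :=
        (MeasureTheory.integral_tsum_of_summable_integral_norm hint hnormsum).symm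
    _ = ∑' k : ℕ, (catalan (k+1) : ℝ) * t ^ k * x ^ (2*k+1) / (Nat.factorial (2*k+1) : ℝ) := by
        apply tsum_congr
        intro k
        rw [hIoc k, hHval k]
    _ = ∑' k : ℕ, (2*x) * ((x^2*t) ^ k / ((Nat.factorial k : ℝ) * (Nat.factorial (k+2) : ℝ))) := by
        apply tsum_congr
        intro k
        have hg := gb_coeff k
        have h5 : (Nat.factorial (2*k+1) : ℝ) ≠ 0 := by positivity
        have h6 : (0:ℝ) < (Nat.factorial k : ℝ) * (Nat.factorial (k+2) : ℝ) := fact_pos' k 2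
        have key : (catalan (k+1) : ℝ) / (Nat.factorial (2*k+1) : ℝ)
            = 2 / ((Nat.factorial k : ℝ) * (Nat.factorial (k+2) : ℝ)) := by
          rw [div_eq_div_iff h5 h6.ne']
          linarith [hg]
        calc (catalan (k+1) : ℝ) * t ^ k * x ^ (2*k+1) / (Nat.factorial (2*k+1) : ℝ)
            = ((catalan (k+1) : ℝ) / (Nat.factorial (2*k+1) : ℝ)) * (t ^ k * x ^ (2*k+1)) := by
              ring
          _ = (2 / ((Nat.factorial k : ℝ) * (Nat.factorial (k+2) : ℝ))) * (t ^ k * x ^ (2*k+1)) := by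
              rw [key]
          _ = (2*x) * ((x^2*t) ^ k / ((Nat.factorial k : ℝ) * (Nat.factorial (k+2) : ℝ))) := by
              rw [show x ^ (2*k+1) = (x^2)^k * x by rw [pow_succ, pow_mul], mul_pow]
              field_simp
    _ = 2 * x * Gb (x ^ 2 * t) := by
        rw [Gb, tsum_mul_left]

lemma continuous_Fb : Continuous Fb :=
  continuous_iff_continuousAt.2 fun u => (hasDerivAt_Fb u).continuousAt

lemma ae_ne_point (a : ℝ) : ∀ᵐ y : ℝ, y ≠ a := by
  rw [MeasureTheory.ae_iff]
  have : {y : ℝ | ¬ y ≠ a} = {a} := by ext y; simp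
  rw [this]
  exact measure_singleton a

/-- In the multiplicative kernel case `K(x,y) = xy` with initial data `g₀(x) = e^{−x}/x`,
the function `g(x;t) = e^{−(1+t)x} I₁(2x√t)/(x²√t)` satisfies the Smoluchowski
coagulation equation
`∂_t g(x;t) = (1/2)∫₀ˣ (x−y)y g(x−y;t)g(y;t) dy − g(x;t)∫₀^∞ xy g(y;t) dy`
for `0 < t ≤ 1`, and attains the initial data `e^{−x}/x` as `t → 0⁺`. -/
theorem multiplicative_kernel_bessel_solution :
    (∀ x : ℝ, 0 < x → ∀ t : ℝ, 0 < t → t ≤ 1 →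
      HasDerivAt (fun τ => gMul x τ)
        ((1 / 2) * (∫ y in (0:ℝ)..x, (x - y) * y * gMul (x - y) t * gMul y t)
          - gMul x t * ∫ y in Set.Ioi (0 : ℝ), x * y * gMul y t) t)
    ∧ ∀ x : ℝ, 0 < x →
        Filter.Tendsto (fun t => gMul x t) (nhdsWithin 0 (Set.Ioi 0))
          (nhds (Real.exp (-x) / x)) := by
  constructor
  · intro x hx t ht ht1
    -- the convolution integral
    have hconv : ∫ y in (0:ℝ)..x, (x - y) * y * gMul (x - y) t * gMul y t
        = Real.exp (-(1+t)*x) * (2 * x * Gb (x^2*t)) := by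
      have hcg : ∫ y in (0:ℝ)..x, (x - y) * y * gMul (x - y) t * gMul y t
          = ∫ y in (0:ℝ)..x, Real.exp (-(1+t)*x) * (Fb ((x - y)^2*t) * Fb (y^2*t)) := by
        rw [intervalIntegral.integral_of_le hx.le, intervalIntegral.integral_of_le hx.le]
        rw [MeasureTheory.integral_Ioc_eq_integral_Ioo, MeasureTheory.integral_Ioc_eq_integral_Ioo]
        apply MeasureTheory.setIntegral_congr_ae measurableSet_Ioo
        filter_upwards with y hy
        obtain ⟨hy0, hyx⟩ := hy
        have hxy : 0 < x - y := by linarith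
        rw [gMul_eq hxy ht, gMul_eq hy0 ht]
        have he : Real.exp (-(1 + t) * (x - y)) * Real.exp (-(1 + t) * y)
            = Real.exp (-(1+t)*x) := by
          rw [← Real.exp_add]; congr 1; ring
        have h1 : (x - y) ≠ 0 := ne_of_gt hxy
        have h2 : y ≠ 0 := ne_of_gt hy0
        have hgen : ∀ a b A B : ℝ, a ≠ 0 → b ≠ 0 → a * b * (A / a) * (B / b) = A * B := by
          intro a b A B ha hb
          field_simp
        rw [hgen _ _ _ _ h1 h2]
        calc rexp (-(1 + t) * (x - y)) * Fb ((x - y) ^ 2 * t) * (rexp (-(1 + t) * y) * Fb (y ^ 2 * t))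
            = (rexp (-(1 + t) * (x - y)) * rexp (-(1 + t) * y)) * (Fb ((x - y) ^ 2 * t) * Fb (y ^ 2 * t)) := by ring
          _ = rexp (-(1 + t) * x) * (Fb ((x - y) ^ 2 * t) * Fb (y ^ 2 * t)) := by rw [he]
      rw [hcg, intervalIntegral.integral_const_mul, conv_eq hx ht.le]
    -- the mass integral
    have hmass : ∫ y in Set.Ioi (0:ℝ), x * y * gMul y t = x := by
      have hcg : ∫ y in Set.Ioi (0:ℝ), x * y * gMul y t
          = ∫ y in Set.Ioi (0:ℝ), x * (Real.exp (-((1+t)*y)) * Fb (y^2*t)) := by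
        apply MeasureTheory.setIntegral_congr_ae measurableSet_Ioi
        filter_upwards with y hy
        rw [gMul_eq hy ht, show -((1+t)*y) = -(1+t)*y by ring]
        have h2 : y ≠ 0 := ne_of_gt hy
        field_simp
      rw [hcg, MeasureTheory.integral_const_mul, mass_eq ht ht1, mul_one]
    -- derivative of the smooth representative
    have hexp : HasDerivAt (fun τ : ℝ => Real.exp (-(1+τ)*x)) (Real.exp (-(1+t)*x) * (-x)) t := by
      have h1 : HasDerivAt (fun τ : ℝ => -(1+τ)*x) (-x) t := by
        have h0 := ((hasDerivAt_id t).const_add (1:ℝ)).neg.mul_const x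
        simpa using h0
      exact h1.exp
    have hFbc : HasDerivAt (fun τ : ℝ => Fb (x^2*τ)) (Gb (x^2*t) * x^2) t := by
      have h2 : HasDerivAt (fun τ : ℝ => x^2*τ) (x^2) t := by
        simpa using (hasDerivAt_id t).const_mul (x^2)
      exact (hasDerivAt_Fb (x^2*t)).comp t h2
    have hφ : HasDerivAt (fun τ : ℝ => Real.exp (-(1+τ)*x) * Fb (x^2*τ) / x)
        ((Real.exp (-(1+t)*x) * (-x) * Fb (x^2*t)
          + Real.exp (-(1+t)*x) * (Gb (x^2*t) * x^2)) / x) t :=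
      (hexp.mul hFbc).div_const x
    have hev : (fun τ => gMul x τ) =ᶠ[nhds t]
        (fun τ : ℝ => Real.exp (-(1+τ)*x) * Fb (x^2*τ) / x) := by
      filter_upwards [Ioi_mem_nhds ht] with τ hτ
      exact gMul_eq hx hτ
    have hD := hφ.congr_of_eventuallyEq hev
    have hval : (1 / 2) * (∫ y in (0:ℝ)..x, (x - y) * y * gMul (x - y) t * gMul y t)
          - gMul x t * ∫ y in Set.Ioi (0 : ℝ), x * y * gMul y t
        = (Real.exp (-(1+t)*x) * (-x) * Fb (x^2*t)
          + Real.exp (-(1+t)*x) * (Gb (x^2*t) * x^2)) / x := by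
      rw [hconv, hmass, gMul_eq hx ht]
      field_simp
      ring
    rw [hval]
    exact hD
  · intro x hx
    have hcont : Continuous (fun t : ℝ => Real.exp (-(1+t)*x) * Fb (x^2*t) / x) := by
      apply Continuous.div_const
      apply Continuous.mul
      · exact Real.continuous_exp.comp (by fun_prop)
      · exact continuous_Fb.comp (by fun_prop)
    have hlim : Filter.Tendsto (fun t : ℝ => Real.exp (-(1+t)*x) * Fb (x^2*t) / x)
        (nhdsWithin 0 (Set.Ioi 0)) (nhds (Real.exp (-x) / x)) := by
      have h0 : Real.exp (-(1+(0:ℝ))*x) * Fb (x^2*0) / x = Real.exp (-x) / x := by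
        norm_num [Fb_zero]
      have := (hcont.tendsto 0).mono_left (nhdsWithin_le_nhds (s := Set.Ioi (0:ℝ)))
      rwa [h0] at this
    apply Filter.Tendsto.congr' _ hlim
    filter_upwards [self_mem_nhdsWithin] with τ hτ
    exact (gMul_eq hx hτ).symm
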